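/- Let P_{XY} be a joint pmf on finite alphabets 𝒳×𝒴 with P_X(x)>0 for every x∈𝒳, and fix y∈𝒴 with P_Y(y)>0. Let g:[0,1]→[0,∞) satisfy: g(0)=0, g is continuous at 0, and 0 < sup_{p∈[0,1]} g(p) < ∞. Then the pointwise maximal g-leakage satisfies sup over finite alphabets 𝒰 and channels P_{U|X} of log[ G_g(P_{U|Y=y}) / G_g(P_U) ] = max_{x:P_{X|Y}(x|y)>0} log[ P_{X|Y}(x|y)/P_X(x) ] = D_∞(P_{X|Y=y}‖P_X). Here P_{U|Y=y}(u)=Σ_x P_{X|Y}(x|y)P_{U|X}(u|x) and P_U(u)=Σ_x P_X(x)P_{U|X}(u|x). -/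

import Mathlib

open Finset
open scoped Classical
set_option maxHeartbeats 1000000

/-- A probability mass function on a finite type. -/
def IsPMF {α : Type*} [Fintype α] (p : α → ℝ) : Prop :=
  (∀ a, 0 ≤ p a) ∧ ∑ a, p a = 1

/-- A channel (row-stochastic kernel). -/
def IsChannel {X U : Type*} [Fintype U] (K : X → U → ℝ) : Prop :=
  ∀ x, IsPMF (K x)

/-- The pmf induced on `U` by a pmf `P` on `X` and a channel `K`. -/
noncomputable def push {X U : Type*} [Fintype X] (P : X → ℝ) (K : X → U → ℝ) : U → ℝ :=
  fun u => ∑ x, P x * K x u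

/-- The maximal expected gain `G_g(R) = sup_{P̂} ∑_u R(u) g(P̂(u))`. -/
noncomputable def maxGain {U : Type*} [Fintype U] (g : ℝ → ℝ) (R : U → ℝ) : ℝ :=
  sSup {v : ℝ | ∃ Ph : U → ℝ, IsPMF Ph ∧ v = ∑ u, R u * g (Ph u)}

/-- The Rényi divergence of order `∞`: `max_{x : P(x) > 0} log (P(x)/Q(x))`. -/
noncomputable def Dinf {X : Type*} [Fintype X] (P Q : X → ℝ) : ℝ :=
  sSup {v : ℝ | ∃ x, 0 < P x ∧ v = Real.log (P x / Q x)}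

lemma pmf_mem_Icc {U : Type*} [Fintype U] {p : U → ℝ} (hp : IsPMF p) (u : U) :
    p u ∈ Set.Icc (0:ℝ) 1 := by
  refine ⟨hp.1 u, ?_⟩
  calc p u ≤ ∑ v, p v := Finset.single_le_sum (fun v _ => hp.1 v) (mem_univ u)
    _ = 1 := hp.2

lemma pmf_single {U : Type*} [Fintype U] (u0 : U) :
    IsPMF (fun u => if u = u0 then (1:ℝ) else 0) := by
  constructor
  · intro u; dsimp only; split <;> norm_num
  · simp

lemma push_pmf {X U : Type*} [Fintype X] [Fintype U] {C : X → ℝ} (hC : IsPMF C)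
    {K : X → U → ℝ} (hK : IsChannel K) : IsPMF (push C K) := by
  constructor
  · intro u
    exact Finset.sum_nonneg fun x _ => mul_nonneg (hC.1 x) ((hK x).1 u)
  · have : ∑ u, push C K u = ∑ x, C x * ∑ u, K x u := by
      simp only [push, Finset.mul_sum]
      exact Finset.sum_comm
    rw [this]
    simp only [fun x => (hK x).2, mul_one, hC.2]

lemma gain_le {U : Type*} [Fintype U] {g : ℝ → ℝ} {M : ℝ}
    (hgM : ∀ t ∈ Set.Icc (0:ℝ) 1, g t ≤ M) {R : U → ℝ} (hR : IsPMF R)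
    {Ph : U → ℝ} (hPh : IsPMF Ph) :
    ∑ u, R u * g (Ph u) ≤ M := by
  calc ∑ u, R u * g (Ph u) ≤ ∑ u, R u * M := by
        apply Finset.sum_le_sum
        intro u _
        exact mul_le_mul_of_nonneg_left (hgM _ (pmf_mem_Icc hPh u)) (hR.1 u)
    _ = M := by rw [← Finset.sum_mul, hR.2, one_mul]

lemma gainSet_bddAbove {U : Type*} [Fintype U] {g : ℝ → ℝ} {M : ℝ}
    (hgM : ∀ t ∈ Set.Icc (0:ℝ) 1, g t ≤ M) {R : U → ℝ} (hR : IsPMF R) :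
    BddAbove {v : ℝ | ∃ Ph : U → ℝ, IsPMF Ph ∧ v = ∑ u, R u * g (Ph u)} := by
  refine ⟨M, ?_⟩
  rintro v ⟨Ph, hPh, rfl⟩
  exact gain_le hgM hR hPh

lemma le_maxGain {U : Type*} [Fintype U] {g : ℝ → ℝ} {M : ℝ}
    (hgM : ∀ t ∈ Set.Icc (0:ℝ) 1, g t ≤ M) {R : U → ℝ} (hR : IsPMF R)
    {Ph : U → ℝ} (hPh : IsPMF Ph) :
    ∑ u, R u * g (Ph u) ≤ maxGain g R :=
  le_csSup (gainSet_bddAbove hgM hR) ⟨Ph, hPh, rfl⟩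

lemma maxGain_le {U : Type*} [Fintype U] [Nonempty U] {g : ℝ → ℝ} {R : U → ℝ} {a : ℝ}
    (h : ∀ Ph : U → ℝ, IsPMF Ph → ∑ u, R u * g (Ph u) ≤ a) :
    maxGain g R ≤ a := by
  apply csSup_le
  · exact ⟨_, _, pmf_single (Classical.arbitrary U), rfl⟩
  · rintro v ⟨Ph, hPh, rfl⟩
    exact h Ph hPh

/-- Under mild regularity assumptions on the gain function `g`, the pointwise
maximal `g`-leakage at `y` equals `D_∞(P_{X|Y=y} ‖ P_X)`:
`sup_{U,P_{U|X}} log (G_g(P_{U|Y=y})/G_g(P_U)) = max_{x : P_{X|Y}(x|y)>0} log (P_{X|Y}(x|y)/P_X(x))`. -/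
theorem stmt9 {X Y : Type} [Fintype X] [Fintype Y]
    (P : X → Y → ℝ) (hP : IsPMF (fun z : X × Y => P z.1 z.2))
    (hPX : ∀ x, 0 < ∑ y, P x y)
    (y : Y) (hy : 0 < ∑ x, P x y)
    (g : ℝ → ℝ)
    (hgnn : ∀ t ∈ Set.Icc (0:ℝ) 1, 0 ≤ g t)
    (hg0 : g 0 = 0)
    (hgc : ContinuousWithinAt g (Set.Icc (0:ℝ) 1) 0)
    (hgb : BddAbove (g '' Set.Icc (0:ℝ) 1))
    (hgpos : 0 < sSup (g '' Set.Icc (0:ℝ) 1)) :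
    IsLUB
      {r : ℝ | ∃ (U : Type) (iU : Fintype U) (K : X → U → ℝ),
        @IsChannel X U iU K ∧
        r = Real.log (@maxGain U iU g (push (fun x => P x y / ∑ x', P x' y) K) /
            @maxGain U iU g (push (fun x => ∑ y', P x y') K))}
      (Dinf (fun x => P x y / ∑ x', P x' y) (fun x => ∑ y', P x y')) := by
  classical
  have hPnn : ∀ (x : X) (y' : Y), 0 ≤ P x y' := fun x y' => hP.1 (x, y')
  set A : X → ℝ := fun x => P x y / ∑ x', P x' y with hAdef
  set B : X → ℝ := fun x => ∑ y', P x y' with hBdef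
  have hAnn : ∀ x, 0 ≤ A x := fun x => div_nonneg (hPnn x y) hy.le
  have hAsum : ∑ x, A x = 1 := by
    simp only [hAdef, ← Finset.sum_div]
    exact div_self (ne_of_gt hy)
  have hApmf : IsPMF A := ⟨hAnn, hAsum⟩
  have hBpos : ∀ x, 0 < B x := hPX
  have hBsum : ∑ x, B x = 1 := by
    rw [hBdef, ← hP.2, Fintype.sum_prod_type]
  have hBpmf : IsPMF B := ⟨fun x => (hBpos x).le, hBsum⟩
  have hBle1 : ∀ x, B x ≤ 1 := fun x => (pmf_mem_Icc hBpmf x).2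
  set M := sSup (g '' Set.Icc (0:ℝ) 1) with hMdef
  have hMpos : 0 < M := hgpos
  have hMle : ∀ t ∈ Set.Icc (0:ℝ) 1, g t ≤ M := fun t ht => le_csSup hgb ⟨t, ht, rfl⟩
  have hTbdd : BddAbove {v : ℝ | ∃ x, 0 < A x ∧ v = Real.log (A x / B x)} := by
    have hsub : {v : ℝ | ∃ x, 0 < A x ∧ v = Real.log (A x / B x)} ⊆
        (fun x => Real.log (A x / B x)) '' Set.univ := by
      rintro v ⟨x, hx, rfl⟩; exact ⟨x, trivial, rfl⟩
    exact (((Set.finite_univ).image _).subset hsub).bddAbove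
  have hex : ∃ x, 0 < A x := by
    by_contra h
    push_neg at h
    have h0 : ∑ x, A x = 0 :=
      Finset.sum_eq_zero fun x _ => le_antisymm (h x) (hAnn x)
    rw [hAsum] at h0; norm_num at h0
  obtain ⟨x0, hx0⟩ := hex
  haveI : Nonempty X := ⟨x0⟩
  have hXuniv : (Finset.univ.filter (fun x => 0 < A x)).Nonempty := ⟨x0, by simp [hx0]⟩
  obtain ⟨xs, hxsmem, hxsmax⟩ :=
    Finset.exists_max_image _ (fun x => Real.log (A x / B x)) hXuniv
  have hAxs : 0 < A xs := (Finset.mem_filter.1 hxsmem).2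
  have hDeq : Dinf A B = Real.log (A xs / B xs) := by
    apply IsGreatest.csSup_eq
    constructor
    · exact ⟨xs, hAxs, rfl⟩
    · rintro v ⟨x, hx, rfl⟩
      exact hxsmax x (by simp [hx])
  have hDle : ∀ x, 0 < A x → Real.log (A x / B x) ≤ Dinf A B := fun x hx =>
    le_csSup hTbdd ⟨x, hx, rfl⟩
  have hL1 : ∀ x, A x ≤ Real.exp (Dinf A B) * B x := by
    intro x
    rcases (hAnn x).eq_or_lt with h | h
    · rw [← h]; exact mul_nonneg (Real.exp_pos _).le (hBpos x).le
    · have h1 : A x / B x ≤ Real.exp (Dinf A B) := by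
        rw [← Real.exp_log (div_pos h (hBpos x))]
        exact Real.exp_le_exp.2 (hDle x h)
      calc A x = A x / B x * B x := (div_mul_cancel₀ _ (hBpos x).ne').symm
        _ ≤ Real.exp (Dinf A B) * B x := mul_le_mul_of_nonneg_right h1 (hBpos x).le
  have hDnn : 0 ≤ Dinf A B := by
    have hexx : ∃ x, 0 < A x ∧ B x ≤ A x := by
      by_contra h
      push_neg at h
      have hlt : ∀ x ∈ (Finset.univ : Finset X), A x < B x := by
        intro x _
        rcases (hAnn x).eq_or_lt with h2 | h2
        · rw [← h2]; exact hBpos x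
        · exact h x h2
      have hcontra := Finset.sum_lt_sum_of_nonempty Finset.univ_nonempty hlt
      rw [hAsum, hBsum] at hcontra; norm_num at hcontra
    obtain ⟨x, hx1, hx2⟩ := hexx
    calc (0:ℝ) ≤ Real.log (A x / B x) := Real.log_nonneg ((one_le_div (hBpos x)).2 hx2)
      _ ≤ Dinf A B := hDle x hx1
  constructor
  · -- upper bound part
    rintro r ⟨U, iU, K, hK, rfl⟩
    haveI hUne : Nonempty U := by
      rcases isEmpty_or_nonempty U with hU | hU
      · have := (hK x0).2
        rw [Finset.univ_eq_empty, Finset.sum_empty] at this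
        norm_num at this
      · exact hU
    have hRupmf : IsPMF (push A K) := push_pmf hApmf hK
    have hSupmf : IsPMF (push B K) := push_pmf hBpmf hK
    set a := maxGain g (push A K) with hadef
    set c := maxGain g (push B K) with hcdef
    have hann : 0 ≤ a := by
      have h1 : (0:ℝ) ≤ ∑ u, push A K u *
          g ((fun u => if u = Classical.arbitrary U then (1:ℝ) else 0) u) := by
        apply Finset.sum_nonneg
        intro u _
        exact mul_nonneg (hRupmf.1 u) (hgnn _ (pmf_mem_Icc (pmf_single _) u))
      exact h1.trans (le_maxGain hMle hRupmf (pmf_single _))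
    have hac : a ≤ Real.exp (Dinf A B) * c := by
      apply maxGain_le
      intro Ph hPh
      have step1 : ∑ u, push A K u * g (Ph u) ≤
          ∑ u, (Real.exp (Dinf A B) * push B K u) * g (Ph u) := by
        apply Finset.sum_le_sum
        intro u _
        apply mul_le_mul_of_nonneg_right _ (hgnn _ (pmf_mem_Icc hPh u))
        calc push A K u = ∑ x, A x * K x u := rfl
          _ ≤ ∑ x, Real.exp (Dinf A B) * (B x * K x u) := by
            apply Finset.sum_le_sum
            intro x _
            rw [← mul_assoc]
            exact mul_le_mul_of_nonneg_right (hL1 x) ((hK x).1 u)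
          _ = Real.exp (Dinf A B) * push B K u := by rw [← Finset.mul_sum]; rfl
      refine step1.trans ?_
      have hre : ∑ u, (Real.exp (Dinf A B) * push B K u) * g (Ph u)
           = Real.exp (Dinf A B) * ∑ u, push B K u * g (Ph u) := by
        rw [Finset.mul_sum]; exact Finset.sum_congr rfl fun u _ => by ring
      rw [hre]
      exact mul_le_mul_of_nonneg_left (le_maxGain hMle hSupmf hPh) (Real.exp_pos _).le
    rcases hann.eq_or_lt with h | h
    · rw [← h, zero_div, Real.log_zero]; exact hDnn
    · have hcpos : 0 < c := by
        by_contra hc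
        push_neg at hc
        nlinarith [Real.exp_pos (Dinf A B)]
      have hdivle : a / c ≤ Real.exp (Dinf A B) := (div_le_iff₀ hcpos).2 hac
      calc Real.log (a / c) ≤ Real.log (Real.exp (Dinf A B)) :=
            Real.log_le_log (div_pos h hcpos) hdivle
        _ = Dinf A B := Real.log_exp _
  · -- least upper bound part
    intro b hb
    by_contra hblt
    push_neg at hblt
    set E := Real.exp b with hEdef
    have hEpos : 0 < E := Real.exp_pos b
    have hEB : E * B xs < A xs := by
      have h1 : E < A xs / B xs := by
        rw [hEdef, ← Real.exp_log (div_pos hAxs (hBpos xs))]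
        exact Real.exp_lt_exp.2 (by rw [← hDeq]; exact hblt)
      exact (lt_div_iff₀ (hBpos xs)).1 h1
    set h0 := M * A xs - E * M * B xs with hh0def
    have hh0 : 0 < h0 := by nlinarith
    have hAE : 0 < A xs + E := by positivity
    set ε := min (M/2) (h0 / (2*(A xs + E))) with hεdef
    have hεpos : 0 < ε := lt_min (by positivity) (by positivity)
    have hε1 : ε ≤ M/2 := min_le_left _ _
    have hε2 : ε ≤ h0 / (2*(A xs + E)) := min_le_right _ _
    obtain ⟨δ, hδpos, hδ⟩ := Metric.continuousWithinAt_iff.1 hgc ε hεpos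
    have hgsmall : ∀ t, 0 ≤ t → t ≤ 1 → t < δ → g t ≤ ε := by
      intro t h1 h2 h3
      have := hδ ⟨h1, h2⟩ (by rw [Real.dist_eq, sub_zero, abs_of_nonneg h1]; exact h3)
      rw [hg0, Real.dist_eq, sub_zero] at this
      exact (le_abs_self _).trans this.le
    obtain ⟨gp, ⟨p, hpIcc, rfl⟩, hgp⟩ :=
      exists_lt_of_lt_csSup (Set.Nonempty.image g (Set.nonempty_Icc.2 (by norm_num)))
        (show M - ε < M by linarith)
    have hgppos : 0 < g p := by linarith
    obtain ⟨n, hn⟩ := exists_nat_gt (2 * E * M * δ⁻¹ / h0)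
    have hc : (0:ℝ) < ((n:ℝ)+2)⁻¹ := by positivity
    have hcn : E * (M * δ⁻¹ * ((n:ℝ)+2)⁻¹) < h0 / 2 := by
      have hQ : 2 * E * M * δ⁻¹ / h0 < (n:ℝ) + 2 := by
        have : (n:ℝ) ≤ (n:ℝ) + 2 := by linarith
        linarith
      have h2 : 2 * E * M * δ⁻¹ < h0 * ((n:ℝ) + 2) := by
        rw [div_lt_iff₀ hh0] at hQ; linarith
      have h3 : E * M * δ⁻¹ < h0 / 2 * ((n:ℝ) + 2) := by linarith
      calc E * (M * δ⁻¹ * ((n:ℝ)+2)⁻¹) = (E * M * δ⁻¹) * ((n:ℝ)+2)⁻¹ := by ring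
        _ < (h0 / 2 * ((n:ℝ)+2)) * ((n:ℝ)+2)⁻¹ := by
            apply mul_lt_mul_of_pos_right h3 hc
        _ = h0 / 2 := by field_simp
    -- the channel
    set K : X → X × Fin (n+2) → ℝ := fun x u =>
      if x = xs then (if u = (xs, 0) then 1 else 0)
      else (if u.1 = x then ((n:ℝ)+2)⁻¹ else 0) with hKdef
    have hKchan : IsChannel K := by
      intro x
      by_cases hx : x = xs
      · constructor
        · intro u; simp only [hKdef, if_pos hx]; split <;> norm_num
        · simp [hKdef, hx]
      · constructor
        · intro u; simp only [hKdef, if_neg hx]; split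
          · positivity
          · exact le_refl (0:ℝ)
        · simp only [hKdef, if_neg hx]
          rw [Fintype.sum_prod_type]
          simp only [Finset.sum_ite_eq', Finset.mem_univ, if_true, Finset.sum_const,
            Finset.card_univ, Fintype.card_fin, nsmul_eq_mul]
          push_cast
          field_simp
          simp only [Finset.sum_const, Finset.card_univ, Fintype.card_fin, nsmul_eq_mul, mul_ite,
            mul_zero, Finset.sum_ite_eq', Finset.mem_univ, if_true]
          push_cast
          field_simp
    -- formula for push B K
    have hSu : ∀ u : X × Fin (n+2), push B K u =
        (if u = (xs, 0) then B xs else 0) +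
        (if u.1 = xs then 0 else B u.1 * ((n:ℝ)+2)⁻¹) := by
      intro u
      show ∑ x, B x * K x u = _
      rw [← Finset.add_sum_erase _ _ (Finset.mem_univ xs)]
      congr 1
      · simp only [hKdef, if_pos rfl]
        split <;> simp
      · by_cases hu : u.1 = xs
        · rw [if_pos hu]
          apply Finset.sum_eq_zero
          intro x hx
          have hxne : x ≠ xs := (Finset.mem_erase.1 hx).1
          have : u.1 ≠ x := by rw [hu]; exact fun h => hxne h.symm
          simp [hKdef, hxne, this]
        · rw [if_neg hu]
          rw [Finset.sum_eq_single u.1]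
          · simp [hKdef, hu]
          · intro x hx hxne
            have hxxs : x ≠ xs := (Finset.mem_erase.1 hx).1
            have : u.1 ≠ x := fun h => hxne h.symm
            simp [hKdef, hxxs, this]
          · intro hmem
            exfalso
            exact hmem (Finset.mem_erase.2 ⟨hu, Finset.mem_univ _⟩)
    -- the test distribution Ph0
    set Ph0 : X × Fin (n+2) → ℝ := fun u =>
      (if u = (xs, 0) then p else 0) + (if u = (xs, 1) then 1 - p else 0) with hPh0def
    have hne01 : ((xs, 0) : X × Fin (n+2)) ≠ (xs, 1) := by
      simp [Prod.ext_iff]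
    have hPh0 : IsPMF Ph0 := by
      constructor
      · intro u
        simp only [hPh0def]
        rcases hpIcc with ⟨hp0, hp1⟩
        split <;> split <;> linarith
      · simp only [hPh0def, Finset.sum_add_distrib, Finset.sum_ite_eq', Finset.mem_univ,
          if_true]
        ring
    have hPh0a : Ph0 (xs, 0) = p := by simp [hPh0def, hne01]
    -- key: value of the gain functional at Ph0
    have helem : ∀ C : X → ℝ, ∑ u, push C K u * g (Ph0 u) = C xs * g p := by
      intro C
      have swap : ∑ u, push C K u * g (Ph0 u) = ∑ x, C x * ∑ u, K x u * g (Ph0 u) := by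
        simp only [push, Finset.sum_mul, Finset.mul_sum, mul_assoc]
        exact Finset.sum_comm
      rw [swap, ← Finset.add_sum_erase _ _ (Finset.mem_univ xs)]
      have h1 : ∑ u, K xs u * g (Ph0 u) = g p := by
        simp only [hKdef, if_pos rfl]
        rw [Finset.sum_eq_single ((xs, 0) : X × Fin (n+2))]
        · rw [if_pos rfl, one_mul, hPh0a]
        · intro u _ hune
          rw [if_neg hune, zero_mul]
        · intro hmem; exact absurd (Finset.mem_univ _) hmem
      have h2 : ∑ x ∈ Finset.univ.erase xs, C x * ∑ u, K x u * g (Ph0 u) = 0 := by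
        apply Finset.sum_eq_zero
        intro x hx
        have hxne : x ≠ xs := (Finset.mem_erase.1 hx).1
        have hz : ∑ u, K x u * g (Ph0 u) = 0 := by
          apply Finset.sum_eq_zero
          intro u _
          by_cases hu : u.1 = x
          · have h1u : u ≠ (xs, 0) := by
              intro h; rw [h] at hu; exact hxne hu.symm
            have h2u : u ≠ (xs, 1) := by
              intro h; rw [h] at hu; exact hxne hu.symm
            have : Ph0 u = 0 := by simp [hPh0def, h1u, h2u]
            rw [this, hg0, mul_zero]
          · simp [hKdef, hxne, hu]
        rw [hz, mul_zero]
      rw [h2, add_zero, h1]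
    have hRupmf : IsPMF (push A K) := push_pmf hApmf hKchan
    have hSupmf : IsPMF (push B K) := push_pmf hBpmf hKchan
    set GA := maxGain g (push A K) with hGAdef
    set GB := maxGain g (push B K) with hGBdef
    have hGA : A xs * g p ≤ GA := by
      rw [← helem A]; exact le_maxGain hMle hRupmf hPh0
    have hGBlb : B xs * g p ≤ GB := by
      rw [← helem B]; exact le_maxGain hMle hSupmf hPh0
    have hGBpos : 0 < GB := lt_of_lt_of_le (mul_pos (hBpos xs) hgppos) hGBlb
    have hGBub : GB ≤ M * B xs + M * δ⁻¹ * ((n:ℝ)+2)⁻¹ + ε := by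
      apply maxGain_le
      intro Ph hPh
      set F := Finset.univ.filter (fun u : X × Fin (n+2) => δ ≤ Ph u) with hFdef
      have hFcard : (F.card : ℝ) ≤ δ⁻¹ := by
        have h1 : (F.card:ℝ) * δ ≤ 1 := by
          calc (F.card:ℝ) * δ = ∑ _u ∈ F, δ := by rw [Finset.sum_const, nsmul_eq_mul]
            _ ≤ ∑ u ∈ F, Ph u := Finset.sum_le_sum fun u hu => (Finset.mem_filter.1 hu).2
            _ ≤ ∑ u, Ph u := Finset.sum_le_sum_of_subset_of_nonneg (Finset.subset_univ F)
                (fun u _ _ => hPh.1 u)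
            _ = 1 := hPh.2
        have h2 := (le_div_iff₀ hδpos).2 h1
        rwa [one_div] at h2
      rw [← Finset.sum_filter_add_sum_filter_not Finset.univ (fun u => δ ≤ Ph u)
        (fun u => push B K u * g (Ph u))]
      have hpart2 : ∑ u ∈ Finset.univ.filter (fun u => ¬ δ ≤ Ph u),
          push B K u * g (Ph u) ≤ ε := by
        calc ∑ u ∈ Finset.univ.filter (fun u => ¬ δ ≤ Ph u), push B K u * g (Ph u)
            ≤ ∑ u ∈ Finset.univ.filter (fun u => ¬ δ ≤ Ph u), push B K u * ε := by
              apply Finset.sum_le_sum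
              intro u hu
              exact mul_le_mul_of_nonneg_left
                (hgsmall (Ph u) (hPh.1 u) (pmf_mem_Icc hPh u).2
                  (not_le.1 (Finset.mem_filter.1 hu).2)) (hSupmf.1 u)
          _ ≤ ∑ u, push B K u * ε := Finset.sum_le_sum_of_subset_of_nonneg
              (Finset.subset_univ _) (fun u _ _ => mul_nonneg (hSupmf.1 u) hεpos.le)
          _ = ε := by rw [← Finset.sum_mul, hSupmf.2, one_mul]
      have hpart1 : ∑ u ∈ F, push B K u * g (Ph u)
          ≤ M * B xs + M * δ⁻¹ * ((n:ℝ)+2)⁻¹ := by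
        calc ∑ u ∈ F, push B K u * g (Ph u) ≤ ∑ u ∈ F, push B K u * M := by
              apply Finset.sum_le_sum
              intro u _
              exact mul_le_mul_of_nonneg_left (hMle _ (pmf_mem_Icc hPh u)) (hSupmf.1 u)
          _ = M * ∑ u ∈ F, push B K u := by rw [← Finset.sum_mul, mul_comm]
          _ ≤ M * (B xs + F.card * ((n:ℝ)+2)⁻¹) := by
              apply mul_le_mul_of_nonneg_left _ hMpos.le
              calc ∑ u ∈ F, push B K u
                  ≤ ∑ u ∈ F, ((if u = (xs,0) then B xs else 0) + ((n:ℝ)+2)⁻¹) := by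
                    apply Finset.sum_le_sum
                    intro u _
                    rw [hSu u]
                    apply add_le_add_right
                    split
                    · exact hc.le
                    · calc B u.1 * ((n:ℝ)+2)⁻¹ ≤ 1 * ((n:ℝ)+2)⁻¹ :=
                        mul_le_mul_of_nonneg_right (hBle1 u.1) hc.le
                        _ = ((n:ℝ)+2)⁻¹ := one_mul _
                _ = (if ((xs,0) : X × Fin (n+2)) ∈ F then B xs else 0)
                    + F.card * ((n:ℝ)+2)⁻¹ := by
                    rw [Finset.sum_add_distrib, Finset.sum_ite_eq' F, Finset.sum_const,
                      nsmul_eq_mul]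
                _ ≤ B xs + F.card * ((n:ℝ)+2)⁻¹ := by
                    apply add_le_add_left
                    split
                    · exact le_refl _
                    · exact (hBpos xs).le
          _ ≤ M * B xs + M * δ⁻¹ * ((n:ℝ)+2)⁻¹ := by
              have h5 : (F.card:ℝ) * ((n:ℝ)+2)⁻¹ ≤ δ⁻¹ * ((n:ℝ)+2)⁻¹ :=
                mul_le_mul_of_nonneg_right hFcard hc.le
              nlinarith
      linarith
    have hkey : E * (M * B xs + M * δ⁻¹ * ((n:ℝ)+2)⁻¹ + ε) < A xs * (M - ε) := by
      have e1 : A xs * (M - ε) - E * (M * B xs + ε) = h0 - ε * (A xs + E) := by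
        rw [hh0def]; ring
      have e2 : ε * (A xs + E) ≤ h0 / 2 := by
        have h6 := (le_div_iff₀ (by positivity : (0:ℝ) < 2*(A xs + E))).1 hε2
        · linarith
      have e4 : E * (M * B xs + M * δ⁻¹ * ((n:ℝ)+2)⁻¹ + ε)
          = E * (M * B xs + ε) + E * (M * δ⁻¹ * ((n:ℝ)+2)⁻¹) := by ring
      linarith
    have hnum : A xs * (M - ε) ≤ A xs * g p := mul_le_mul_of_nonneg_left hgp.le hAxs.le
    have hfrac : E < GA / GB := by
      rw [lt_div_iff₀ hGBpos]
      calc E * GB ≤ E * (M * B xs + M * δ⁻¹ * ((n:ℝ)+2)⁻¹ + ε) :=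
            mul_le_mul_of_nonneg_left hGBub hEpos.le
        _ < A xs * (M - ε) := hkey
        _ ≤ A xs * g p := hnum
        _ ≤ GA := hGA
    have hrin : Real.log (GA / GB) ∈
        {r : ℝ | ∃ (U : Type) (iU : Fintype U) (K : X → U → ℝ),
          @IsChannel X U iU K ∧
          r = Real.log (@maxGain U iU g (push A K) / @maxGain U iU g (push B K))} :=
      ⟨X × Fin (n+2), inferInstance, K, hKchan, rfl⟩
    have hle := hb hrin
    have hgt : b < Real.log (GA / GB) := by
      calc b = Real.log E := (Real.log_exp b).symm
        _ < Real.log (GA / GB) := Real.log_lt_log hEpos hfrac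
    linarith
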